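/- Suppose gcd(N, p) = 1. Then the image of S₀(n,N) under reduction modulo p is all of GL(n, ℤ/pℤ): for every matrix ḡ ∈ GL(n, ℤ/pℤ) there exists s ∈ S₀(n,N) with s ≡ ḡ (mod p). -/

import Mathlib

open Matrix

/-- `S₀(n,N)`: integer matrices with positive determinant relatively prime to `pN`,
whose first row is `≡ (∗,0,…,0) (mod N)`. -/
def S0 (p N : ℕ) {n : ℕ} : Set (Matrix (Fin (n + 1)) (Fin (n + 1)) ℤ) :=
  {s | 0 < s.det ∧ Int.gcd s.det (p * N) = 1 ∧ ∀ j : Fin (n + 1), j ≠ 0 → (N : ℤ) ∣ s 0 j}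

/-- if `gcd(N,p) = 1` then reduction mod `p` maps `S₀(n,N)` onto
`GL(n, ℤ/pℤ)`. -/
theorem stmt7 (p : ℕ) (hp : p.Prime) (n N : ℕ) (hN : 0 < N) (hNp : Nat.gcd N p = 1)
    (g : Matrix (Fin (n + 1)) (Fin (n + 1)) (ZMod p)) (hg : IsUnit g.det) :
    ∃ s : Matrix (Fin (n + 1)) (Fin (n + 1)) ℤ,
      s ∈ S0 p N ∧ s.map (Int.cast : ℤ → ZMod p) = g := by
  haveI : NeZero p := ⟨hp.ne_zero⟩
  haveI : Fact p.Prime := ⟨hp⟩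
  obtain ⟨a, b, hab⟩ := Nat.isCoprime_iff_coprime.mpr hNp
  set G : Matrix (Fin (n+1)) (Fin (n+1)) ℤ := fun i j => ((g i j).val : ℤ) with hG
  set s₀ : Matrix (Fin (n+1)) (Fin (n+1)) ℤ :=
    (fun i j => a * N * G i j + b * p * (if i = j then 1 else 0)) with hs₀
  have haN : (a : ZMod p) * (N : ZMod p) = 1 := by
    have := congrArg (Int.cast : ℤ → ZMod p) hab
    push_cast at this ⊢
    rw [ZMod.natCast_self p, mul_zero, add_zero] at this
    exact this
  have hbp : (b : ZMod N) * (p : ZMod N) = 1 := by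
    have := congrArg (Int.cast : ℤ → ZMod N) hab
    push_cast at this ⊢
    rw [ZMod.natCast_self N, mul_zero, zero_add] at this
    exact this
  have hmapp : s₀.map (Int.cast : ℤ → ZMod p) = g := by
    ext i j
    have hGij : ((G i j : ℤ) : ZMod p) = g i j := by
      simp [hG, ZMod.natCast_val, ZMod.cast_id]
    rw [Matrix.map_apply]
    simp only [hs₀]
    push_cast
    rw [ZMod.natCast_self p]
    simp only [mul_zero, zero_mul, add_zero]
    rw [haN, one_mul, hGij]
  have hmapN : s₀.map (Int.cast : ℤ → ZMod N) = 1 := by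
    ext i j
    rw [Matrix.map_apply]
    simp only [hs₀, Matrix.one_apply]
    push_cast
    rw [ZMod.natCast_self N]
    simp only [mul_zero, zero_mul, zero_add]
    rw [hbp, one_mul]
  set d : ℤ := s₀.det with hd
  have castp : ⇑(Int.castRingHom (ZMod p)) = (Int.cast : ℤ → ZMod p) := rfl
  have hdp : ((d : ZMod p)) = g.det := by
    have h := RingHom.map_det (Int.castRingHom (ZMod p)) s₀
    rw [RingHom.mapMatrix_apply, castp, hmapp] at h
    exact h
  have hdN : ((d : ZMod N)) = 1 := by
    have h := RingHom.map_det (Int.castRingHom (ZMod N)) s₀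
    rw [RingHom.mapMatrix_apply, show ⇑(Int.castRingHom (ZMod N)) = (Int.cast : ℤ → ZMod N) from rfl, hmapN, Matrix.det_one] at h
    exact h
  have hdvdN : (N : ℤ) ∣ d - 1 := by
    have : ((d - 1 : ℤ) : ZMod N) = 0 := by push_cast; rw [hdN]; ring
    exact (ZMod.intCast_zmod_eq_zero_iff_dvd _ N).mp this
  have hcpN : IsCoprime d (N : ℤ) := by
    obtain ⟨k, hk⟩ := hdvdN
    exact ⟨1, -k, by linarith⟩
  have hcpp : IsCoprime d (p : ℤ) := by
    have hpZ : Prime (p : ℤ) := Nat.prime_iff_prime_int.mp hp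
    have hnd : ¬ (p : ℤ) ∣ d := by
      intro h
      have h0 : ((d : ZMod p)) = 0 := (ZMod.intCast_zmod_eq_zero_iff_dvd d p).mpr h
      exact hg.ne_zero (hdp.symm.trans h0)
    exact ((hpZ.coprime_iff_not_dvd).mpr hnd).symm
  have hcpd : IsCoprime d ((p : ℤ) * N) := hcpp.mul_right hcpN
  have hgcd : Int.gcd d ((p : ℤ) * N) = 1 := Int.isCoprime_iff_gcd_eq_one.mp hcpd
  have hdne : d ≠ 0 := by
    intro h0
    rw [h0] at hgcd
    simp [Int.gcd, Int.natAbs_mul] at hgcd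
    exact hp.one_lt.ne' hgcd.1
  -- choose scaling constant
  set c : ℤ := if 0 < d then 1 else 1 - (p : ℤ) * N with hc
  have hcc : IsCoprime c ((p : ℤ) * N) := by
    rw [hc]; split
    · exact isCoprime_one_left
    · exact ⟨1, 1, by ring⟩
  have hcd : 0 < c * d := by
    rw [hc]; split
    · simpa
    · rename_i h
      have hdlt : d < 0 := lt_of_le_of_ne (not_lt.mp h) hdne
      have hc0 : 1 - (p : ℤ) * N < 0 := by
        have : (2 : ℤ) ≤ p := by exact_mod_cast hp.two_le
        have : (1 : ℤ) ≤ N := by exact_mod_cast hN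
        nlinarith
      exact mul_pos_of_neg_of_neg hc0 hdlt
  have hcp1 : ((c : ZMod p)) = 1 := by
    rw [hc]; split <;> push_cast <;> simp [ZMod.natCast_self p]
  -- the matrix
  set s : Matrix (Fin (n+1)) (Fin (n+1)) ℤ := s₀.updateRow 0 (c • s₀ 0) with hs
  have hsdet : s.det = c * d := by
    rw [hs, Matrix.det_updateRow_smul, Matrix.updateRow_eq_self, hd]
  refine ⟨s, ⟨?_, ?_, ?_⟩, ?_⟩
  · rw [hsdet]; exact hcd
  · rw [hsdet]
    exact Int.isCoprime_iff_gcd_eq_one.mp (by exact_mod_cast hcc.mul_left hcpd)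
  · intro j hj
    rw [hs]
    simp only [Matrix.updateRow_self, Pi.smul_apply, smul_eq_mul]
    refine Dvd.dvd.mul_left ?_ c
    simp only [hs₀]
    have : (if (0 : Fin (n+1)) = j then (1:ℤ) else 0) = 0 := by
      simp [Ne.symm hj]
    rw [this, mul_zero, add_zero]
    exact ⟨a * G 0 j, by ring⟩
  · rw [hs]
    ext i j
    by_cases hi : i = 0
    · subst hi
      simp only [Matrix.map_apply, Matrix.updateRow_self, Pi.smul_apply, smul_eq_mul]
      push_cast
      rw [hcp1, one_mul]
      have := congrFun (congrFun hmapp 0) j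
      simpa [Matrix.map_apply] using this
    · simp only [Matrix.map_apply, Matrix.updateRow_ne hi]
      have := congrFun (congrFun hmapp i) j
      simpa [Matrix.map_apply] using this
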